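/- arXiv:2106.07450 — 2 statements merged into one kernel-verified Lean document; each statement's English description precedes it below -/
import Mathlib

section
/- Let U₀ = {w ∈ ℂ : |w| < 1/2, Re w > 0} with hyperbolic density ρ_{U₀}, obtained by pulling back the density 1/Re(·) on ℍ₊ under the conformal bijection ψ(w) = (1/i)((2w−i)/(2w+i))². Then for every w = x + iy ∈ U₀ one has the identity ρ_{U₀}(w)/(1/x) = (1 + x²/(1/4 − y² − x²)) · (1 + x²/(1/2 + y)²)^{1/2} · (1 + x²/(1/2 − y)²)^{1/2}. In particular, for w ∈ 𝔻_{1/4} ∩ ℍ₊ the ratio of the hyperbolic density of U₀ to that of ℍ₊ at w equals 1 + O(x²) as x → 0, uniformly in y. -/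
/-- The map `ψ(w) = (1/i)·((2w − i)/(2w + i))²`. -/
noncomputable def psiMap (w : ℂ) : ℂ :=
  (1 / Complex.I) * (((2 * w - Complex.I) / (2 * w + Complex.I)) ^ 2)

/-- The half-disk `U₀ = {w : |w| < 1/2, Re w > 0}`. -/
def halfDiskU0 : Set ℂ := {w : ℂ | ‖w‖ < 1 / 2 ∧ 0 < w.re}

/-- The hyperbolic density of `U₀`, pulled back from the density `1/Re` on the
right half-plane under the conformal bijection `ψ`. -/
noncomputable def rhoU0 (w : ℂ) : ℝ := ((psiMap w).re)⁻¹ * ‖deriv psiMap w‖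

open Complex in
lemma deriv_psiMap {w : ℂ} (hb : 2 * w + I ≠ 0) :
    deriv psiMap w = 8 * (2 * w - I) / (2 * w + I) ^ 3 := by
  have h1 : HasDerivAt (fun z : ℂ => 2 * z - I) 2 w := by
    simpa using ((hasDerivAt_id w).const_mul (2:ℂ)).sub_const I
  have h2 : HasDerivAt (fun z : ℂ => 2 * z + I) 2 w := by
    simpa using ((hasDerivAt_id w).const_mul (2:ℂ)).add_const I
  have hq := h1.div h2 hb
  have hp := (hq.pow 2).const_mul (1 / I)
  have h := hp.deriv
  change deriv psiMap w = 1 / I * (((2:ℕ):ℂ) * ((2 * w - I) / (2 * w + I)) ^ (2 - 1) *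
    ((2 * (2 * w + I) - (2 * w - I) * 2) / (2 * w + I) ^ 2)) at h
  rw [h]
  have hI : I ≠ 0 := I_ne_zero
  field_simp
  ring_nf
  have h3 : I ^ 3 = -I := by simp [pow_succ, Complex.I_mul_I]
  have h4 : I ^ 4 = 1 := by simp [pow_succ, Complex.I_mul_I]
  have h5 : I ^ 5 = I := by simp [pow_succ, Complex.I_mul_I]
  have h6 : I ^ 6 = -1 := by simp [pow_succ, Complex.I_mul_I]
  have hb' : w * 2 + I ≠ 0 := by rwa [mul_comm] at hb
  linear_combination (16 * w * I + 8) * (mul_inv_cancel₀ hb') + (8 - 16 * w * (w * 2 + I)⁻¹ - 8 * I * (w * 2 + I)⁻¹) * I_sq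

open Complex in
lemma re_psiMap (w : ℂ) :
    (psiMap w).re =
      8 * w.re * (1 - 4 * (w.re ^ 2 + w.im ^ 2)) / (Complex.normSq (2 * w + I)) ^ 2 := by
  have h : (psiMap w).re = (((2 * w - I) ^ 2) / ((2 * w + I) ^ 2)).im := by
    rw [psiMap, div_pow, one_div, Complex.inv_I, neg_mul, Complex.neg_re, Complex.mul_re]
    simp
  rw [h, Complex.div_im]
  rw [show Complex.normSq ((2*w+I)^2) = (Complex.normSq (2*w+I))^2 by
    simp [map_pow Complex.normSq]]
  simp only [Complex.normSq_apply, pow_two, Complex.mul_im, Complex.mul_re,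
    Complex.add_re, Complex.add_im, Complex.sub_re, Complex.sub_im,
    Complex.I_re, Complex.I_im, Complex.re_ofNat, Complex.im_ofNat]
  field_simp
  ring

open Complex in
lemma key (w : ℂ) (h1 : ‖w‖ < 1 / 2) (h2 : 0 < w.re) :
    rhoU0 w * w.re =
      (1 + w.re ^ 2 / (1 / 4 - w.im ^ 2 - w.re ^ 2)) *
        Real.sqrt (1 + w.re ^ 2 / (1 / 2 + w.im) ^ 2) *
        Real.sqrt (1 + w.re ^ 2 / (1 / 2 - w.im) ^ 2) := by
  set x := w.re with hx
  set y := w.im with hy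
  have hs : x ^ 2 + y ^ 2 < 1 / 4 := by
    nlinarith [Complex.sq_norm w, norm_nonneg w, h1, Complex.normSq_apply w]
  have hyb : |y| < 1 / 2 := lt_of_le_of_lt (Complex.abs_im_le_norm w) h1
  have hy1 : 0 < 1 / 2 + y := by cases abs_lt.mp hyb; linarith
  have hy2 : 0 < 1 / 2 - y := by cases abs_lt.mp hyb; linarith
  have hy1' : (2 * y + 1) ≠ 0 := by linarith
  have hy2' : (1 - 2 * y) ≠ 0 := by linarith
  have hb : 2 * w + I ≠ 0 := by
    intro h
    have : (2 * w + I).re = 0 := by rw [h]; simp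
    simp [Complex.add_re, Complex.mul_re] at this
    nlinarith
  have hnb : Complex.normSq (2 * w + I) = 4 * x ^ 2 + (2 * y + 1) ^ 2 := by
    simp [Complex.normSq_apply, Complex.add_re, Complex.add_im, Complex.mul_re, Complex.mul_im]
    ring
  have hna : Complex.normSq (2 * w - I) = 4 * x ^ 2 + (2 * y - 1) ^ 2 := by
    simp [Complex.normSq_apply, Complex.sub_re, Complex.sub_im, Complex.mul_re, Complex.mul_im]
    ring
  set na : ℝ := 4 * x ^ 2 + (2 * y - 1) ^ 2 with hna'
  set nb : ℝ := 4 * x ^ 2 + (2 * y + 1) ^ 2 with hnb'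
  have hnb0 : 0 < nb := by nlinarith
  have hna0 : 0 < na := by nlinarith
  set sa : ℝ := Real.sqrt na with hsa'
  set sb : ℝ := Real.sqrt nb with hsb'
  have hsa0 : 0 < sa := Real.sqrt_pos.mpr hna0
  have hsb0 : 0 < sb := Real.sqrt_pos.mpr hnb0
  have hsa2 : sa ^ 2 = na := Real.sq_sqrt hna0.le
  have hsb2 : sb ^ 2 = nb := Real.sq_sqrt hnb0.le
  have habs8 : ‖(8:ℂ)‖ = 8 := by norm_num
  have hnorm : ‖deriv psiMap w‖ = 8 * sa / sb ^ 3 := by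
    rw [deriv_psiMap hb, norm_div, norm_mul, norm_pow]
    rw [habs8,
      Complex.norm_def, Complex.norm_def, hna, hnb, ← hsa', ← hsb']
  have hre : (psiMap w).re = 8 * x * (1 - 4 * (x ^ 2 + y ^ 2)) / nb ^ 2 := by
    rw [re_psiMap, hnb]
  have h14 : (0:ℝ) < 1 - 4 * (x ^ 2 + y ^ 2) := by nlinarith
  have hD : (0:ℝ) < 1 / 4 - y ^ 2 - x ^ 2 := by nlinarith
  have hA : Real.sqrt (1 + x ^ 2 / (1 / 2 + y) ^ 2) = sb / (2 * y + 1) := by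
    have hp1 : ((1/2 + y)^2 : ℝ) ≠ 0 := pow_ne_zero 2 (ne_of_gt hy1)
    have e : 1 + x ^ 2 / (1 / 2 + y) ^ 2 = nb / (2 * y + 1) ^ 2 := by
      rw [add_div' _ _ _ hp1, div_eq_div_iff hp1 (pow_ne_zero 2 hy1'), hnb']
      ring
    rw [e, Real.sqrt_div hnb0.le, Real.sqrt_sq (by linarith)]
  have hB : Real.sqrt (1 + x ^ 2 / (1 / 2 - y) ^ 2) = sa / (1 - 2 * y) := by
    have hp1 : ((1/2 - y)^2 : ℝ) ≠ 0 := pow_ne_zero 2 (ne_of_gt hy2)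
    have e : 1 + x ^ 2 / (1 / 2 - y) ^ 2 = na / (1 - 2 * y) ^ 2 := by
      rw [add_div' _ _ _ hp1, div_eq_div_iff hp1 (pow_ne_zero 2 hy2'), hna']
      ring
    rw [e, Real.sqrt_div hna0.le, Real.sqrt_sq (by linarith)]
  rw [rhoU0, hre, hnorm, hA, hB]
  clear_value sa sb na nb x y
  have lhs_eq : (8 * x * (1 - 4 * (x ^ 2 + y ^ 2)) / nb ^ 2)⁻¹ * (8 * sa / sb ^ 3) * x
      = sa * sb / (1 - 4 * (x ^ 2 + y ^ 2)) := by
    rw [← hsb2]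
    field_simp
  rw [lhs_eq]
  have e1 : 1 + x ^ 2 / (1 / 4 - y ^ 2 - x ^ 2) = (1 / 4 - y ^ 2) / (1 / 4 - y ^ 2 - x ^ 2) := by
    rw [add_div' _ _ _ (ne_of_gt hD)]
    ring_nf
  rw [e1]
  have hne1 : (1 / 4 - y ^ 2 - x ^ 2) * (2 * y + 1) * (1 - 2 * y) ≠ 0 :=
    mul_ne_zero (mul_ne_zero (ne_of_gt hD) hy1') hy2'
  have hne2 : (1 - 4 * (x ^ 2 + y ^ 2)) ≠ 0 := ne_of_gt h14
  rw [div_mul_div_comm, div_mul_div_comm, div_eq_div_iff hne2 hne1]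
  ring


lemma prodBound (t f1 f2 f3 : ℝ) (ht : 0 ≤ t) (ht' : t ≤ 1/16)
    (h1l : 1 ≤ f1) (h1u : f1 ≤ 1 + 16/3 * t)
    (h2l : 1 ≤ f2) (h2u : f2 ≤ 1 + 8 * t)
    (h3l : 1 ≤ f3) (h3u : f3 ≤ 1 + 8 * t) :
    |f1 * f2 * f3 - 1| ≤ 32 * t := by
  have h23 : 1 ≤ f2 * f3 := by nlinarith [mul_nonneg (sub_nonneg.mpr h2l) (sub_nonneg.mpr h3l)]
  have h23u : f2 * f3 ≤ (1 + 8*t) * (1 + 8*t) :=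
    mul_le_mul h2u h3u (by linarith) (by linarith)
  have hlow : 1 ≤ f1 * f2 * f3 := by
    rw [mul_assoc]
    nlinarith [mul_nonneg (sub_nonneg.mpr h1l) (sub_nonneg.mpr h23)]
  have hProd : f1 * f2 * f3 ≤ (1 + 16/3 * t) * ((1 + 8*t) * (1 + 8*t)) := by
    rw [mul_assoc]
    apply mul_le_mul h1u h23u (by linarith) (by linarith)
  rw [abs_le]
  refine ⟨by nlinarith, ?_⟩
  nlinarith [hProd, mul_nonneg ht (sub_nonneg.mpr ht'), sq_nonneg t,
    mul_nonneg (mul_nonneg ht ht) (sub_nonneg.mpr ht')]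

lemma sqrtBound (t A : ℝ) (ht : 0 ≤ t) (hA : 1/16 ≤ A) :
    1 ≤ Real.sqrt (1 + t / A) ∧ Real.sqrt (1 + t / A) ≤ 1 + 8 * t := by
  have hA0 : 0 < A := lt_of_lt_of_le (by norm_num) hA
  have htA : 0 ≤ t / A := by positivity
  constructor
  · have := Real.sqrt_le_sqrt (show (1:ℝ) ≤ 1 + t / A by linarith)
    rwa [Real.sqrt_one] at this
  · rw [show (1:ℝ) + 8 * t = Real.sqrt ((1 + 8*t)^2) from (Real.sqrt_sq (by linarith)).symm]
    apply Real.sqrt_le_sqrt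
    have : t / A ≤ 16 * t := by rw [div_le_iff₀ hA0]; nlinarith
    nlinarith

/-- For `w = x + iy ∈ U₀`, the ratio of the hyperbolic density of `U₀` to the
density `1/x` of the half-plane equals
`(1 + x²/(1/4 − y² − x²))·(1 + x²/(1/2+y)²)^{1/2}·(1 + x²/(1/2−y)²)^{1/2}`;
in particular, on `𝔻_{1/4} ∩ ℍ₊` this ratio is `1 + O(x²)`, uniformly in `y`. -/
theorem rhoU0_identity :
    (∀ w ∈ halfDiskU0, rhoU0 w * w.re =
        (1 + w.re ^ 2 / (1 / 4 - w.im ^ 2 - w.re ^ 2)) *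
          Real.sqrt (1 + w.re ^ 2 / (1 / 2 + w.im) ^ 2) *
          Real.sqrt (1 + w.re ^ 2 / (1 / 2 - w.im) ^ 2)) ∧
    ∃ C : ℝ, 0 < C ∧ ∀ w : ℂ, ‖w‖ < 1 / 4 → 0 < w.re →
      |rhoU0 w * w.re - 1| ≤ C * w.re ^ 2 := by
  constructor
  · intro w hw
    exact key w hw.1 hw.2
  · refine ⟨32, by norm_num, ?_⟩
    intro w habs hre
    have hw : ‖w‖ < 1 / 2 := lt_trans habs (by norm_num)
    rw [key w hw hre]
    have hs : w.re ^ 2 + w.im ^ 2 < 1 / 16 := by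
      nlinarith [Complex.sq_norm w, norm_nonneg w, habs, Complex.normSq_apply w]
    have hyb : |w.im| < 1 / 4 := lt_of_le_of_lt (Complex.abs_im_le_norm w) habs
    obtain ⟨hy1, hy2⟩ := abs_lt.mp hyb
    have ht : 0 ≤ w.re ^ 2 := sq_nonneg _
    have ht' : w.re ^ 2 ≤ 1 / 16 := by nlinarith
    have hD : 3 / 16 ≤ 1 / 4 - w.im ^ 2 - w.re ^ 2 := by nlinarith
    have hD0 : (0:ℝ) < 1 / 4 - w.im ^ 2 - w.re ^ 2 := by nlinarith
    have hA : 1 / 16 ≤ (1 / 2 + w.im) ^ 2 := by nlinarith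
    have hB : 1 / 16 ≤ (1 / 2 - w.im) ^ 2 := by nlinarith
    obtain ⟨h2l, h2u⟩ := sqrtBound (w.re ^ 2) ((1 / 2 + w.im) ^ 2) ht hA
    obtain ⟨h3l, h3u⟩ := sqrtBound (w.re ^ 2) ((1 / 2 - w.im) ^ 2) ht hB
    apply prodBound _ _ _ _ ht ht' _ _ h2l h2u h3l h3u
    · have : 0 ≤ w.re ^ 2 / (1 / 4 - w.im ^ 2 - w.re ^ 2) := by positivity
      linarith
    · have : w.re ^ 2 / (1 / 4 - w.im ^ 2 - w.re ^ 2) ≤ 16 / 3 * w.re ^ 2 := by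
        rw [div_le_iff₀ hD0]; nlinarith
      linarith
end

section
/- For every β ∈ (0, π/2), the inequality (π − β) · sin(πβ/(π − β)) < π · sin(β) holds. Equivalently, the constant μ(β) = ((π − β) sin(πβ/(π − β)))/(π sin β) satisfies 0 < μ(β) < 1. -/
open Real

/-- For every `β ∈ (0, π/2)` one has `(π − β)·sin(πβ/(π − β)) < π·sin β`;
equivalently, the contraction constant
`μ(β) = ((π − β) sin(πβ/(π − β)))/(π sin β)` satisfies `0 < μ(β) < 1`. -/
theorem contraction_constant_lt_one (β : ℝ) (hβ : β ∈ Set.Ioo 0 (π / 2)) :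
    (π - β) * Real.sin (π * β / (π - β)) < π * Real.sin β ∧
    0 < ((π - β) * Real.sin (π * β / (π - β))) / (π * Real.sin β) ∧
    ((π - β) * Real.sin (π * β / (π - β))) / (π * Real.sin β) < 1 := by
  obtain ⟨hβ0, hβ2⟩ := hβ
  have hπ : (0:ℝ) < π := Real.pi_pos
  have hβπ : β < π - β := by linarith
  have hd : (0:ℝ) < π - β := by linarith
  set t : ℝ := π * β / (π - β) with ht
  have ht0 : 0 < t := div_pos (mul_pos hπ hβ0) hd
  have htπ : t < π := by
    rw [ht, div_lt_iff₀ hd]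
    nlinarith
  have hw2 : 0 < β / t := div_pos hβ0 ht0
  have hw1 : 0 < 1 - β / t := by
    have : β / t < 1 := (div_lt_one ht0).2 (by
      rw [ht, lt_div_iff₀ hd]; nlinarith)
    linarith
  have hcc := strictConcaveOn_sin_Icc.2
    (by constructor <;> [rfl; exact le_of_lt hπ] : (0:ℝ) ∈ Set.Icc 0 π)
    (⟨le_of_lt ht0, le_of_lt htπ⟩ : t ∈ Set.Icc 0 π)
    (ne_of_lt ht0) hw1 hw2 (by ring)
  have htne : t ≠ 0 := ne_of_gt ht0
  have hkey : (β / t) * Real.sin t < Real.sin β := by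
    have h1 : (1 - β / t) • (0:ℝ) + (β / t) • t = β := by
      simp only [smul_eq_mul]; field_simp; ring
    have h2 : (1 - β / t) • Real.sin 0 + (β / t) • Real.sin t
        = (β / t) * Real.sin t := by
      simp [Real.sin_zero]
    rw [h1, h2] at hcc
    exact hcc
  have hmain : (π - β) * Real.sin t < π * Real.sin β := by
    have h3 : π * ((β / t) * Real.sin t) = (π - β) * Real.sin t := by
      rw [ht]; field_simp
    nlinarith [mul_lt_mul_of_pos_left hkey hπ]
  have hsint : 0 < Real.sin t := Real.sin_pos_of_pos_of_lt_pi ht0 htπ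
  have hsinβ : 0 < Real.sin β := Real.sin_pos_of_pos_of_lt_pi hβ0 (by linarith)
  have hnum : 0 < (π - β) * Real.sin t := mul_pos hd hsint
  have hden : 0 < π * Real.sin β := mul_pos hπ hsinβ
  exact ⟨hmain, div_pos hnum hden, (div_lt_one hden).2 hmain⟩
end
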